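/- For every t∈ℤ₊, d̄_t ≥ P(σ^min > t), where σ^min is a random variable with distribution function F^min = max_{v∈V} F_v, and F_v is the distribution function of σ̃_v = inf{t≥0 : ∪_{s≤t} A_{X_s} = V} for a random walk X on G started at v. -/

import Mathlib

open MeasureTheory ProbabilityTheory Filter
open scoped ENNReal Classical

noncomputable section

/-- The closed neighborhood `A_v = {u : {u,v} ∈ E} ∪ {v}` of a vertex `v` of `G`. -/
def nbhd {V : Type*} [Fintype V] [DecidableEq V] (G : SimpleGraph V) [DecidableRel G.Adj]
    (v : V) : Finset V := insert v (G.neighborFinset v)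

/-- The `Exp(1)` distribution on `ℝ`. -/
def expM : Measure ℝ :=
  MeasureTheory.volume.withDensity fun t => ENNReal.ofReal (if 0 ≤ t then Real.exp (-t) else 0)

/-- A minimizer of `Γ` on the nonempty finite set `s`. -/
def argminOn {V : Type*} (Γ : V → ℝ) (s : Finset V) (hs : s.Nonempty) : V :=
  (Finset.exists_min_image s Γ hs).choose

/-- One step transition kernel of the local Bak-Sneppen model on `G`: from state `(v, Γ)`,
move to the vertex `x = argmin_{u ∈ A_v} Γ(u)`, and resample the fitnesses on `A_x` as
i.i.d. `Exp(1)` (independent of everything), keeping all other fitnesses unchanged. -/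
def step {V : Type*} [Fintype V] [DecidableEq V] [MeasurableSpace V]
    (G : SimpleGraph V) [DecidableRel G.Adj] (s : V × (V → ℝ)) : Measure (V × (V → ℝ)) :=
  (Measure.pi fun _ : V => expM).map
    (fun U =>
      (argminOn s.2 (nbhd G s.1) ⟨s.1, Finset.mem_insert_self _ _⟩,
       fun w => if w ∈ nbhd G (argminOn s.2 (nbhd G s.1) ⟨s.1, Finset.mem_insert_self _ _⟩)
         then U w else s.2 w))

/-- The law of `Ξ_t` for the local Bak-Sneppen chain on `G` started at state `η`. -/
def lawAt {V : Type*} [Fintype V] [DecidableEq V] [MeasurableSpace V]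
    (G : SimpleGraph V) [DecidableRel G.Adj] (η : V × (V → ℝ)) : ℕ → Measure (V × (V → ℝ))
  | 0 => Measure.dirac η
  | n + 1 => (lawAt G η n).bind (step G)

/-- The state space `Ω`: states whose fitness function is nonnegative and one-to-one. -/
def goodStates {V : Type*} : Set (V × (V → ℝ)) :=
  {s | Function.Injective s.2 ∧ ∀ v, 0 ≤ s.2 v}

/-- Total variation distance `sup_A |μ(A) - ν(A)|` between two measures. -/
def tvDist {α : Type*} [MeasurableSpace α] (μ ν : Measure α) : ℝ :=
  ⨆ A : {A : Set α // MeasurableSet A}, |(μ A.1).toReal - (ν A.1).toReal|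

/-- `d̄_t = sup_{η,η' ∈ Ω} ‖P_η(Ξ_t ∈ ·) - P_{η'}(Ξ_t ∈ ·)‖_TV`. -/
def dbar {V : Type*} [Fintype V] [DecidableEq V] [MeasurableSpace V]
    (G : SimpleGraph V) [DecidableRel G.Adj] (t : ℕ) : ℝ :=
  ⨆ η : (goodStates (V := V)), ⨆ η' : (goodStates (V := V)),
    tvDist (lawAt G η.1 t) (lawAt G η'.1 t)

/-- Finite-dimensional laws `(Ξ_0, …, Ξ_n)` of the chain started at `η`. -/
def fdd {V : Type*} [Fintype V] [DecidableEq V] [MeasurableSpace V]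
    (G : SimpleGraph V) [DecidableRel G.Adj] (η : V × (V → ℝ)) :
    (n : ℕ) → Measure (Fin (n + 1) → V × (V → ℝ))
  | 0 => Measure.dirac (fun _ => η)
  | n + 1 => (fdd G η n).bind fun path => (step G (path (Fin.last n))).map (Fin.snoc path)

/-- `P` is the law `P_η` on path space of the local Bak-Sneppen chain on `G` started
at `η`: it is the probability measure whose finite-dimensional distributions are the
ones produced by iterating the one-step transition kernel from `η`. -/
def IsChainLaw {V : Type*} [Fintype V] [DecidableEq V] [MeasurableSpace V]
    (G : SimpleGraph V) [DecidableRel G.Adj] (η : V × (V → ℝ))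
    (P : Measure (ℕ → V × (V → ℝ))) : Prop :=
  IsProbabilityMeasure P ∧
    ∀ n : ℕ, P.map (fun ω (i : Fin (n + 1)) => ω i) = fdd G η n

/-- `Exp⁺(n)`: the law of `Y₁` conditioned on the event that `Y₁` is not the minimum of
`Y₁, …, Y_n`, where `Y₁, …, Y_n` are i.i.d. `Exp(1)`. -/
def expPlus : ℕ → Measure ℝ
  | 0 => 0
  | m + 1 =>
    (ProbabilityTheory.cond (Measure.pi fun _ : Fin (m + 1) => expM)
      {y | ∃ i, y i < y 0}).map (fun y => y 0)

/-- Transition probabilities `p(u,w) = 1_{A_u}(w)/|A_u|` of the random walk on `G`. -/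
def trP {V : Type*} [Fintype V] [DecidableEq V] (G : SimpleGraph V) [DecidableRel G.Adj]
    (u w : V) : ℝ :=
  (if w ∈ nbhd G u then 1 else 0) / ((nbhd G u).card : ℝ)

/-- The probability weight of a path of the random walk on `G`. -/
def walkWt {V : Type*} [Fintype V] [DecidableEq V] (G : SimpleGraph V) [DecidableRel G.Adj]
    {t : ℕ} (x : Fin (t + 1) → V) : ℝ :=
  ∏ i : Fin t, trP G (x i.castSucc) (x i.succ)

/-- `F_v(t) = P(σ̃_v ≤ t)` where `σ̃_v = inf{t ≥ 0 : ∪_{s ≤ t} A_{X_s} = V}` for the random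
walk `X` on `G` started at `v`. -/
def coverF {V : Type*} [Fintype V] [DecidableEq V] (G : SimpleGraph V) [DecidableRel G.Adj]
    (v : V) (t : ℕ) : ℝ :=
  ∑ x ∈ Finset.univ.filter (fun x : Fin (t + 1) → V =>
      x 0 = v ∧ ∀ u : V, ∃ i, u ∈ nbhd G (x i)), walkWt G x

/-- `Ψ(b)`: the proportion of vertices whose fitness is at least `b`. -/
def propAbove {V : Type*} [Fintype V] (b : ℝ) (Γ : V → ℝ) : ℝ :=
  ((Finset.univ.filter fun v => b ≤ Γ v).card : ℝ) / (Fintype.card V : ℝ)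

/-- The set `A_{α,b}` of states in which a proportion at least `α` of the vertices has
fitness `≥ b`. -/
def Aab {V : Type*} [Fintype V] (α b : ℝ) : Set (V × (V → ℝ)) :=
  {s | α ≤ propAbove b s.2}

/-- `p_{d,b} = P(Exp⁺(d+1) ≥ b) = ((d+1)/d)(e^{-b} - e^{-(d+1)b}/(d+1))`. -/
def pd (d : ℕ) (b : ℝ) : ℝ :=
  (((d : ℝ) + 1) / d) * (Real.exp (-b) - Real.exp (-((d : ℝ) + 1) * b) / ((d : ℝ) + 1))

/-- `P(Binomial(k,p) ≥ m)`. -/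
def binomTail (k m : ℕ) (p : ℝ) : ℝ :=
  ∑ j ∈ Finset.Icc m k, (k.choose j : ℝ) * p ^ j * (1 - p) ^ (k - j)

/-- Finite-dimensional laws of the random walk on `G` with initial distribution `μ0`. -/
def walkFdd {V : Type*} [Fintype V] [DecidableEq V] [MeasurableSpace V]
    (G : SimpleGraph V) [DecidableRel G.Adj] (μ0 : V → ℝ) (n : ℕ) :
    Measure (Fin (n + 1) → V) :=
  ∑ x : Fin (n + 1) → V, ENNReal.ofReal (μ0 (x 0) * walkWt G x) • Measure.dirac x

section Aux
set_option linter.unusedSectionVars false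
variable {V : Type*} [Fintype V] [DecidableEq V]

lemma exists_choose_eq {α : Sort*} {P Q : α → Prop} (h : P = Q) (h1 : ∃ x, P x) (h2 : ∃ x, Q x) :
    h1.choose = h2.choose := by subst h; rfl

lemma argminOn_spec (Γ : V → ℝ) (s : Finset V) (hs : s.Nonempty) :
    argminOn Γ s hs ∈ s ∧ ∀ c ∈ s, Γ (argminOn Γ s hs) ≤ Γ c :=
  (Finset.exists_min_image s Γ hs).choose_spec

lemma argminOn_mem (Γ : V → ℝ) (s : Finset V) (hs : s.Nonempty) : argminOn Γ s hs ∈ s :=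
  (argminOn_spec Γ s hs).1

lemma argminOn_congr {Γ Γ' : V → ℝ} {s : Finset V} (hs : s.Nonempty)
    (h : ∀ b ∈ s, Γ b = Γ' b) : argminOn Γ s hs = argminOn Γ' s hs := by
  apply exists_choose_eq
  funext b
  apply propext
  constructor
  · rintro ⟨hb, hmin⟩
    exact ⟨hb, fun c hc => by rw [← h b hb, ← h c hc]; exact hmin c hc⟩
  · rintro ⟨hb, hmin⟩
    exact ⟨hb, fun c hc => by rw [h b hb, h c hc]; exact hmin c hc⟩

lemma argminOn_eq_of_unique {Γ : V → ℝ} {s : Finset V} (hs : s.Nonempty) {b : V}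
    (hb : b ∈ s) (h : ∀ c ∈ s, c ≠ b → Γ b < Γ c) : argminOn Γ s hs = b := by
  by_contra hne
  have h1 := argminOn_spec Γ s hs
  have h2 := h _ h1.1 hne
  have h3 := h1.2 b hb
  linarith

/-- The set of minimizers of `Γ` on `s`. -/
def minSet (Γ : V → ℝ) (s : Finset V) : Finset V :=
  s.filter (fun b => ∀ c ∈ s, Γ b ≤ Γ c)

lemma argminOn_eq_of_minSet_eq {Γ Γ' : V → ℝ} {s : Finset V} (hs : s.Nonempty)
    (h : minSet Γ s = minSet Γ' s) : argminOn Γ s hs = argminOn Γ' s hs := by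
  apply exists_choose_eq
  funext b
  have h1 : (b ∈ s ∧ ∀ c ∈ s, Γ b ≤ Γ c) ↔ b ∈ minSet Γ s := by
    simp [minSet, Finset.mem_filter]
  have h2 : (b ∈ s ∧ ∀ c ∈ s, Γ' b ≤ Γ' c) ↔ b ∈ minSet Γ' s := by
    simp [minSet, Finset.mem_filter]
  exact propext (h1.trans (h ▸ h2.symm))

lemma measurableSet_minSet_fiber (s M : Finset V) :
    MeasurableSet {g : V → ℝ | minSet g s = M} := by
  have : {g : V → ℝ | minSet g s = M} =
      ⋂ b : V, {g : V → ℝ | (b ∈ s ∧ ∀ c ∈ s, g b ≤ g c) ↔ b ∈ M} := by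
    ext g
    simp only [Set.mem_setOf_eq, Set.mem_iInter, Finset.ext_iff, minSet, Finset.mem_filter]
  rw [this]
  refine MeasurableSet.iInter fun b => ?_
  have hms : MeasurableSet {g : V → ℝ | ∀ c ∈ s, g b ≤ g c} := by
    have : {g : V → ℝ | ∀ c ∈ s, g b ≤ g c} = ⋂ c ∈ (s : Set V), {g : V → ℝ | g b ≤ g c} := by
      ext g; simp
    rw [this]
    exact MeasurableSet.biInter s.countable_toSet fun c _ =>
      measurableSet_le (measurable_pi_apply b) (measurable_pi_apply c)
  by_cases hbM : b ∈ M <;> by_cases hbs : b ∈ s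
  · have : {g : V → ℝ | (b ∈ s ∧ ∀ c ∈ s, g b ≤ g c) ↔ b ∈ M} = {g : V → ℝ | ∀ c ∈ s, g b ≤ g c} := by
      ext g; simp [hbM, hbs]
    rw [this]; exact hms
  · have : {g : V → ℝ | (b ∈ s ∧ ∀ c ∈ s, g b ≤ g c) ↔ b ∈ M} = ∅ := by
      ext g; simp [hbM, hbs]
    rw [this]; exact MeasurableSet.empty
  · have : {g : V → ℝ | (b ∈ s ∧ ∀ c ∈ s, g b ≤ g c) ↔ b ∈ M} = {g : V → ℝ | ∀ c ∈ s, g b ≤ g c}ᶜ := by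
      ext g; simp [hbM, hbs]
    rw [this]; exact hms.compl
  · have : {g : V → ℝ | (b ∈ s ∧ ∀ c ∈ s, g b ≤ g c) ↔ b ∈ M} = Set.univ := by
      ext g; simp [hbM, hbs]
    rw [this]; exact MeasurableSet.univ

lemma measurableSet_argminOn_fiber (s : Finset V) (hs : s.Nonempty) (u : V) :
    MeasurableSet {g : V → ℝ | argminOn g s hs = u} := by
  have hcover : {g : V → ℝ | argminOn g s hs = u} =
      ⋃ M : Finset V, {g : V → ℝ | minSet g s = M} ∩ {g : V → ℝ | argminOn g s hs = u} := by
    ext g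
    simp only [Set.mem_iUnion, Set.mem_inter_iff, Set.mem_setOf_eq]
    exact ⟨fun h => ⟨minSet g s, rfl, h⟩, fun ⟨M, _, h⟩ => h⟩
  rw [hcover]
  refine MeasurableSet.iUnion fun M => ?_
  by_cases hex : ∃ g₀ : V → ℝ, minSet g₀ s = M ∧ argminOn g₀ s hs = u
  · obtain ⟨g₀, hg₀M, hg₀u⟩ := hex
    have : {g : V → ℝ | minSet g s = M} ∩ {g : V → ℝ | argminOn g s hs = u} =
        {g : V → ℝ | minSet g s = M} := by
      ext g
      simp only [Set.mem_inter_iff, Set.mem_setOf_eq, and_iff_left_iff_imp]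
      intro hg
      rw [argminOn_eq_of_minSet_eq hs (hg.trans hg₀M.symm), hg₀u]
    rw [this]; exact measurableSet_minSet_fiber s M
  · have : {g : V → ℝ | minSet g s = M} ∩ {g : V → ℝ | argminOn g s hs = u} = ∅ := by
      ext g
      simp only [Set.mem_inter_iff, Set.mem_setOf_eq, Set.mem_empty_iff_false, iff_false, not_and]
      intro h1 h2
      exact hex ⟨g, h1, h2⟩
    rw [this]; exact MeasurableSet.empty

end Aux
section Aux2
set_option linter.unusedSectionVars false
set_option maxHeartbeats 1000000

lemma expM_null {S : Set ℝ} (h : volume S = 0) : expM S = 0 :=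
  (withDensity_absolutelyContinuous _ _) h

lemma expM_countable_null {S : Set ℝ} (h : S.Countable) : expM S = 0 :=
  expM_null (h.measure_zero _)

instance expM_prob : IsProbabilityMeasure expM := by
  constructor
  have hae : (fun t => ENNReal.ofReal (if 0 ≤ t then Real.exp (-t) else 0)) =ᵐ[volume]
      (Set.Ioi (0:ℝ)).indicator (fun t => ENNReal.ofReal (Real.exp (-t))) := by
    filter_upwards [compl_mem_ae_iff.2 ((Set.countable_singleton (0:ℝ)).measure_zero _)] with t ht
    have ht0 : t ≠ 0 := ht
    by_cases h : (0:ℝ) ≤ t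
    · have hlt : (0:ℝ) < t := lt_of_le_of_ne h (Ne.symm ht0)
      rw [if_pos h, Set.indicator_of_mem (Set.mem_Ioi.2 hlt)]
    · rw [if_neg h, Set.indicator_of_notMem (by simp [Set.mem_Ioi]; linarith [not_le.1 h])]
      simp
  have hint : IntegrableOn (fun t : ℝ => Real.exp (-t)) (Set.Ioi 0) := by
    have := exp_neg_integrableOn_Ioi 0 (b := 1) one_pos
    simpa using this
  calc expM Set.univ
      = ∫⁻ t, ENNReal.ofReal (if 0 ≤ t then Real.exp (-t) else 0) := by
        rw [expM, withDensity_apply _ MeasurableSet.univ, Measure.restrict_univ]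
    _ = ∫⁻ t in Set.Ioi (0:ℝ), ENNReal.ofReal (Real.exp (-t)) := by
        rw [lintegral_congr_ae hae, lintegral_indicator measurableSet_Ioi]
    _ = ENNReal.ofReal (∫ t in Set.Ioi (0:ℝ), Real.exp (-t)) :=
        (ofReal_integral_eq_lintegral_ofReal hint
          (Filter.Eventually.of_forall fun t => (Real.exp_pos _).le)).symm
    _ = 1 := by rw [integral_exp_neg_Ioi_zero, ENNReal.ofReal_one]

end Aux2
section Aux3
set_option linter.unusedSectionVars false
set_option maxHeartbeats 1000000
variable {V : Type*} [Fintype V] [DecidableEq V]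

/-- Product of `Exp(1)`'s over the coordinates. -/
abbrev piE (V : Type*) [Fintype V] : Measure (V → ℝ) := Measure.pi fun _ : V => expM

lemma measurableSet_minOn (s : Finset V) (w : V) :
    MeasurableSet {g : V → ℝ | ∀ c ∈ s, g w ≤ g c} := by
  have : {g : V → ℝ | ∀ c ∈ s, g w ≤ g c} = ⋂ c ∈ (s : Set V), {g : V → ℝ | g w ≤ g c} := by
    ext g; simp
  rw [this]
  exact MeasurableSet.biInter s.countable_toSet fun c _ =>
    measurableSet_le (measurable_pi_apply w) (measurable_pi_apply c)

lemma measurableSet_strictMinOn (s : Finset V) (w : V) :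
    MeasurableSet {g : V → ℝ | ∀ c ∈ s, c ≠ w → g w < g c} := by
  have : {g : V → ℝ | ∀ c ∈ s, c ≠ w → g w < g c} =
      ⋂ c ∈ ((s.filter (· ≠ w)) : Set V), {g : V → ℝ | g w < g c} := by
    ext g; simp
  rw [this]
  exact MeasurableSet.biInter (Finset.countable_toSet _) fun c _ =>
    measurableSet_lt (measurable_pi_apply w) (measurable_pi_apply c)

lemma piE_pair_null {w w' : V} (h : w ≠ w') : piE V {U : V → ℝ | U w = U w'} = 0 := by
  classical
  set p : V → Prop := fun i => i = w with hp
  have hD : MeasurableSet {U : V → ℝ | U w = U w'} :=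
    measurableSet_eq_fun (measurable_pi_apply w) (measurable_pi_apply w')
  set e := MeasurableEquiv.piEquivPiSubtypeProd (fun _ : V => ℝ) p with he
  have hmp := measurePreserving_piEquivPiSubtypeProd (fun _ : V => expM) p
  have hDs : MeasurableSet (e.symm ⁻¹' {U : V → ℝ | U w = U w'}) := e.symm.measurable hD
  have h1 := hmp.measure_preimage hDs.nullMeasurableSet
  have h2 : ⇑e ⁻¹' (e.symm ⁻¹' {U : V → ℝ | U w = U w'}) = {U : V → ℝ | U w = U w'} := by
    ext U; simp
  rw [h2] at h1
  rw [h1, Measure.prod_apply hDs]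
  have inner : ∀ a : Subtype p → ℝ,
      (Measure.pi fun _ : {i // ¬ p i} => expM) (Prod.mk a ⁻¹' (e.symm ⁻¹' {U : V → ℝ | U w = U w'})) = 0 := by
    intro a
    have hw' : ¬ p w' := by simp [hp]; exact fun hc => h hc.symm
    have : (Prod.mk a ⁻¹' (e.symm ⁻¹' {U : V → ℝ | U w = U w'})) ⊆
        Function.eval (⟨w', hw'⟩ : {i // ¬ p i}) ⁻¹' {a ⟨w, rfl⟩} := by
      intro b hb
      simp only [Set.mem_preimage, Set.mem_setOf_eq] at hb ⊢
      have hsymm : ∀ i, e.symm (a, b) i = if h : p i then a ⟨i, h⟩ else b ⟨i, h⟩ := fun i => rfl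
      rw [hsymm w, hsymm w'] at hb
      rw [dif_pos rfl] at hb
      rw [dif_neg hw'] at hb
      simp [hb.symm]
    refine measure_mono_null this ?_
    exact Measure.pi_eval_preimage_null _ (expM_countable_null (Set.countable_singleton _))
  simp only [inner, lintegral_zero]

lemma piE_swap_invariant (eqv : V ≃ V) :
    MeasurePreserving (fun U : V → ℝ => U ∘ eqv) (piE V) (piE V) := by
  have h := measurePreserving_piCongrLeft (fun _ : V => expM) eqv.symm
  have hfun : ⇑(MeasurableEquiv.piCongrLeft (fun _ : V => ℝ) eqv.symm) =
      (fun U : V → ℝ => U ∘ eqv) := by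
    funext U
    funext i
    have := MeasurableEquiv.piCongrLeft_apply_apply (β := fun _ : V => ℝ) eqv.symm U (eqv i)
    simpa using this
  rw [hfun] at h
  exact h

lemma piE_min_le (s : Finset V) (u'' : V) (hu : u'' ∈ s) :
    piE V {U : V → ℝ | ∀ c ∈ s, U u'' ≤ U c} ≤ (s.card : ℝ≥0∞)⁻¹ := by
  classical
  set T : V → Set (V → ℝ) := fun w => {U : V → ℝ | ∀ c ∈ s, U w ≤ U c} with hT
  set S : V → Set (V → ℝ) := fun w => {U : V → ℝ | ∀ c ∈ s, c ≠ w → U w < U c} with hS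
  -- tie set is null
  set N : Set (V → ℝ) := ⋃ (w : V) (w' : V) (_ : w ≠ w'), {U : V → ℝ | U w = U w'} with hN
  have hNnull : piE V N = 0 := by
    refine measure_iUnion_null fun w => measure_iUnion_null fun w' => measure_iUnion_null fun hne => ?_
    exact piE_pair_null hne
  -- T w ≤ S w + N
  have hTS : ∀ w ∈ s, piE V (T w) ≤ piE V (S w) := by
    intro w hw
    have hsub : T w ⊆ S w ∪ N := by
      intro U hU
      by_cases hUS : U ∈ S w
      · exact Or.inl hUS
      · refine Or.inr ?_
        simp only [hS, Set.mem_setOf_eq, not_forall] at hUS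
        obtain ⟨c, hc, hcne, hnlt⟩ := hUS
        have hle : U w ≤ U c := hU c hc
        have : U w = U c := le_antisymm hle (not_lt.1 hnlt)
        exact Set.mem_iUnion.2 ⟨w, Set.mem_iUnion.2 ⟨c, Set.mem_iUnion.2 ⟨fun hcc => hcne hcc.symm, this⟩⟩⟩
    calc piE V (T w) ≤ piE V (S w ∪ N) := measure_mono hsub
      _ ≤ piE V (S w) + piE V N := measure_union_le _ _
      _ = piE V (S w) := by rw [hNnull, add_zero]
  -- symmetry : piE (T w) = piE (T u'') for w ∈ s
  have hsym : ∀ w ∈ s, piE V (T u'') = piE V (T w) := by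
    intro w hw
    have hmp := piE_swap_invariant (V := V) (Equiv.swap u'' w)
    have hswap_mem : ∀ c ∈ s, Equiv.swap u'' w c ∈ s := by
      intro c hc
      rcases eq_or_ne c u'' with rfl | h1
      · rwa [Equiv.swap_apply_left]
      rcases eq_or_ne c w with rfl | h2
      · rwa [Equiv.swap_apply_right]
      · rwa [Equiv.swap_apply_of_ne_of_ne h1 h2]
    have hpre : (fun U : V → ℝ => U ∘ (Equiv.swap u'' w)) ⁻¹' (T w) = T u'' := by
      ext U
      simp only [Set.mem_preimage, hT, Set.mem_setOf_eq, Function.comp_apply]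
      constructor
      · intro hU c hc
        have h3 := hU (Equiv.swap u'' w c) (hswap_mem c hc)
        rwa [Equiv.swap_apply_right, Equiv.swap_apply_self] at h3
      · intro hU c hc
        rw [Equiv.swap_apply_right]
        exact hU _ (hswap_mem c hc)
    have h4 := hmp.measure_preimage (measurableSet_minOn s w).nullMeasurableSet
    rw [hpre] at h4
    exact h4
  -- S w pairwise disjoint, union ≤ 1
  have hdisj : (s : Set V).PairwiseDisjoint S := by
    intro w hw w' hw' hne
    refine Set.disjoint_left.2 fun U hU hU' => ?_
    have h1 := hU w' (by exact_mod_cast hw') (Ne.symm hne)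
    have h2 := hU' w (by exact_mod_cast hw) hne
    linarith
  have hsum : ∑ w ∈ s, piE V (S w) ≤ 1 := by
    rw [← measure_biUnion_finset hdisj fun w _ => measurableSet_strictMinOn s w]
    exact prob_le_one
  -- combine
  have hcard : (s.card : ℝ≥0∞) * piE V (T u'') ≤ 1 := by
    have : (s.card : ℝ≥0∞) * piE V (T u'') = ∑ w ∈ s, piE V (T u'') := by
      rw [Finset.sum_const, nsmul_eq_mul]
    rw [this]
    calc ∑ w ∈ s, piE V (T u'') = ∑ w ∈ s, piE V (T w) :=
          Finset.sum_congr rfl fun w hw => hsym w hw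
      _ ≤ ∑ w ∈ s, piE V (S w) := Finset.sum_le_sum fun w hw => hTS w hw
      _ ≤ 1 := hsum
  have hcard0 : (s.card : ℝ≥0∞) ≠ 0 := by
    simp only [ne_eq, Nat.cast_eq_zero]
    exact Finset.card_ne_zero_of_mem hu
  have hcardt : (s.card : ℝ≥0∞) ≠ ⊤ := ENNReal.natCast_ne_top _
  rw [mul_comm, ← ENNReal.le_div_iff_mul_le (Or.inl hcard0) (Or.inl hcardt)] at hcard
  simpa [ENNReal.div_eq_inv_mul, one_div] using hcard

lemma piE_argmin_le (s : Finset V) (hs : s.Nonempty) (u'' : V) (hu : u'' ∈ s) :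
    piE V {U : V → ℝ | argminOn U s hs = u''} ≤ (s.card : ℝ≥0∞)⁻¹ := by
  refine le_trans (measure_mono ?_) (piE_min_le s u'' hu)
  intro U hU
  simp only [Set.mem_setOf_eq] at hU ⊢
  intro c hc
  rw [← hU]
  exact (argminOn_spec U s hs).2 c hc

end Aux3
section Aux4
set_option linter.unusedSectionVars false
set_option maxHeartbeats 1000000
variable {V : Type*} [Fintype V] [DecidableEq V] [MeasurableSpace V] [MeasurableSingletonClass V]
  (G : SimpleGraph V) [DecidableRel G.Adj]

lemma measurableSet_V (S : Set V) : MeasurableSet S := S.toFinite.measurableSet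

/-- The argmin map giving the next position. -/
def argMap (s : V × (V → ℝ)) : V :=
  argminOn s.2 (nbhd G s.1) ⟨s.1, Finset.mem_insert_self _ _⟩

lemma measurable_argMap : Measurable (argMap G) := by
  apply measurable_to_countable'
  intro u
  have h : argMap G ⁻¹' {u} =
      ⋃ x : V, ((Prod.fst ⁻¹' {x}) ∩ (Prod.snd ⁻¹'
        {g : V → ℝ | argminOn g (nbhd G x) ⟨x, Finset.mem_insert_self _ _⟩ = u})) := by
    ext ⟨y, g⟩
    simp only [Set.mem_preimage, Set.mem_singleton_iff, Set.mem_iUnion, Set.mem_inter_iff,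
      Set.mem_setOf_eq, argMap]
    constructor
    · intro h; exact ⟨y, rfl, h⟩
    · rintro ⟨x, rfl, h⟩; exact h
  rw [h]
  refine MeasurableSet.iUnion fun x => ?_
  exact (measurable_fst (measurableSet_V {x})).inter
    (measurable_snd (measurableSet_argminOn_fiber _ _ u))

/-- The deterministic part of the one-step transition, as a function of (state, new fitnesses). -/
def stepFun (p : (V × (V → ℝ)) × (V → ℝ)) : V × (V → ℝ) :=
  (argMap G p.1, fun w => if w ∈ nbhd G (argMap G p.1) then p.2 w else p.1.2 w)

lemma measurable_stepFun : Measurable (stepFun G) := by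
  refine Measurable.prodMk ?_ ?_
  · exact (measurable_argMap G).comp measurable_fst
  · refine measurable_pi_lambda _ fun w => ?_
    have hC : MeasurableSet {p : (V × (V → ℝ)) × (V → ℝ) | w ∈ nbhd G (argMap G p.1)} :=
      ((measurable_argMap G).comp measurable_fst) (measurableSet_V {x | w ∈ nbhd G x})
    exact Measurable.ite hC ((measurable_pi_apply w).comp measurable_snd)
      (((measurable_pi_apply w).comp (measurable_snd.comp measurable_fst)))

lemma step_eq (s : V × (V → ℝ)) : step G s = (piE V).map (fun U => stepFun G (s, U)) := rfl

lemma measurable_stepSec (s : V × (V → ℝ)) : Measurable (fun U => stepFun G (s, U)) :=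
  (measurable_stepFun G).comp measurable_prodMk_left

lemma step_apply (s : V × (V → ℝ)) {S : Set (V × (V → ℝ))} (hS : MeasurableSet S) :
    step G s S = piE V ((fun U => stepFun G (s, U)) ⁻¹' S) := by
  rw [step_eq, Measure.map_apply (measurable_stepSec G s) hS]

instance step_prob (s : V × (V → ℝ)) : IsProbabilityMeasure (step G s) := by
  rw [step_eq]; exact Measure.isProbabilityMeasure_map (measurable_stepSec G s).aemeasurable

lemma measurable_step : Measurable (step G) := by
  apply Measure.measurable_of_measurable_coe
  intro S hS
  have h : ∀ s, step G s S = ∫⁻ U, S.indicator 1 (stepFun G (s, U)) ∂(piE V) := by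
    intro s
    rw [step_apply G s hS, ← lintegral_indicator_one ((measurable_stepSec G s) hS)]
    refine lintegral_congr fun U => ?_
    by_cases h : stepFun G (s, U) ∈ S <;> simp [Set.indicator, h]
  simp_rw [h]
  exact Measurable.lintegral_prod_right (f := fun s U => S.indicator 1 (stepFun G (s, U)))
    ((measurable_one.indicator hS).comp (measurable_stepFun G))

instance lawAt_prob (η : V × (V → ℝ)) (t : ℕ) : IsProbabilityMeasure (lawAt G η t) := by
  induction t with
  | zero => show IsProbabilityMeasure (Measure.dirac η); infer_instance
  | succ n ih =>
    show IsProbabilityMeasure ((lawAt G η n).bind (step G))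
    constructor
    rw [Measure.bind_apply MeasurableSet.univ (measurable_step G).aemeasurable]
    have h : ∀ s, step G s Set.univ = 1 := fun s => measure_univ
    simp_rw [h, lintegral_one, ih.measure_univ]

end Aux4
section Aux5
set_option linter.unusedSectionVars false
set_option maxHeartbeats 1000000
variable {V : Type*} [Fintype V] [DecidableEq V] (G : SimpleGraph V) [DecidableRel G.Adj]

lemma nbhd_self (u : V) : u ∈ nbhd G u := Finset.mem_insert_self _ _

lemma nbhd_card_pos (u : V) : 0 < (nbhd G u).card :=
  Finset.card_pos.2 ⟨u, nbhd_self G u⟩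

lemma trP_nonneg (u w : V) : 0 ≤ trP G u w := by
  rw [trP]
  apply div_nonneg
  · split <;> norm_num
  · exact Nat.cast_nonneg _

lemma walkWt_nonneg {t : ℕ} (x : Fin (t+1) → V) : 0 ≤ walkWt G x :=
  Finset.prod_nonneg fun i _ => trP_nonneg G _ _

lemma coverF_nonneg (v : V) (t : ℕ) : 0 ≤ coverF G v t :=
  Finset.sum_nonneg fun x _ => walkWt_nonneg G x

lemma trP_sum (u : V) : ∑ w : V, trP G u w = 1 := by
  unfold trP
  rw [← Finset.sum_div, Finset.sum_boole, Finset.filter_univ_mem, div_self]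
  exact Nat.cast_ne_zero.2 (ne_of_gt (nbhd_card_pos G u))

lemma walkWt_snoc {t : ℕ} (x : Fin (t+1) → V) (z : V) :
    walkWt G (Fin.snoc x z) = walkWt G x * trP G (x (Fin.last t)) z := by
  rw [walkWt, walkWt, Fin.prod_univ_castSucc]
  congr 1
  · refine Finset.prod_congr rfl fun j _ => ?_
    rw [Fin.succ_castSucc, Fin.snoc_castSucc, Fin.snoc_castSucc]
  · rw [Fin.succ_last, Fin.snoc_last, Fin.snoc_castSucc]

/-- `dws v m u W`: probability that the random walk started at `v`, after `m` steps,
is at `u` and the walk's closed neighborhoods have covered all of `W`. -/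
def dws (v : V) (m : ℕ) (u : V) (W : Finset V) : ℝ :=
  ∑ ℓ : Fin (m+1) → V, if ℓ 0 = v ∧ ℓ (Fin.last m) = u ∧ (∀ w ∈ W, ∃ i, w ∈ nbhd G (ℓ i))
    then walkWt G ℓ else 0

lemma dws_nonneg (v : V) (m : ℕ) (u : V) (W : Finset V) : 0 ≤ dws G v m u W :=
  Finset.sum_nonneg fun ℓ _ => by
    split
    · exact walkWt_nonneg G ℓ
    · exact le_refl _

lemma dws_zero_self (v : V) (W : Finset V) (hW : ∀ w ∈ W, w ∈ nbhd G v) :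
    dws G v 0 v W = 1 := by
  rw [dws]
  rw [Finset.sum_eq_single (fun _ => v)]
  · have h0 : ((fun _ => v : Fin 1 → V) 0 = v ∧ (fun _ => v : Fin 1 → V) (Fin.last 0) = v ∧
        ∀ w ∈ W, ∃ i : Fin 1, w ∈ nbhd G ((fun _ => v : Fin 1 → V) i)) :=
      ⟨rfl, rfl, fun w hw => ⟨0, hW w hw⟩⟩
    rw [if_pos h0, walkWt]
    simp
  · intro ℓ _ hne
    rw [if_neg]
    rintro ⟨h0, -, -⟩
    exact hne (funext fun i => by rw [Fin.eq_zero i]; exact h0)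
  · intro h
    exact absurd (Finset.mem_univ _) h

lemma cover_snoc {m : ℕ} (x : Fin (m+1) → V) (z : V) (W : Finset V) :
    (∀ w ∈ W, ∃ i : Fin (m+2), w ∈ nbhd G ((Fin.snoc x z : Fin (m+2) → V) i)) ↔
      (∀ w ∈ W \ nbhd G z, ∃ i : Fin (m+1), w ∈ nbhd G (x i)) := by
  constructor
  · intro h w hw
    obtain ⟨hwW, hwz⟩ := Finset.mem_sdiff.1 hw
    obtain ⟨i, hi⟩ := h w hwW
    refine Fin.lastCases ?_ (fun j hj => ⟨j, by rwa [Fin.snoc_castSucc] at hj⟩) i hi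
    intro hlast
    rw [Fin.snoc_last] at hlast
    exact absurd hlast hwz
  · intro h w hw
    by_cases hz : w ∈ nbhd G z
    · exact ⟨Fin.last (m+1), by rwa [Fin.snoc_last]⟩
    · obtain ⟨j, hj⟩ := h w (Finset.mem_sdiff.2 ⟨hw, hz⟩)
      exact ⟨j.castSucc, by rwa [Fin.snoc_castSucc]⟩

lemma sum_snoc_eq {m : ℕ} (F : (Fin (m+2) → V) → ℝ) :
    ∑ ℓ : Fin (m+2) → V, F ℓ = ∑ z : V, ∑ x : Fin (m+1) → V, F (Fin.snoc x z) := by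
  calc ∑ ℓ : Fin (m+2) → V, F ℓ
      = ∑ p : V × (Fin (m+1) → V), F (Fin.snocEquiv (fun _ => V) p) :=
        (Fintype.sum_equiv (Fin.snocEquiv (fun _ => V)) _ _ (fun p => rfl)).symm
    _ = ∑ z : V, ∑ x : Fin (m+1) → V, F (Fin.snoc x z) := Fintype.sum_prod_type _

lemma dws_succ (v : V) (m : ℕ) (u'' : V) (W : Finset V) :
    dws G v (m+1) u'' W = ∑ u : V, dws G v m u (W \ nbhd G u'') * trP G u u'' := by
  rw [dws, sum_snoc_eq]
  have hz0 : ∀ (x : Fin (m+1) → V) (z : V), (Fin.snoc x z : Fin (m+2) → V) 0 = x 0 := by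
    intro x z
    have : (0 : Fin (m+2)) = Fin.castSucc (0 : Fin (m+1)) := rfl
    rw [this, Fin.snoc_castSucc]
  have hL : ∀ z, (∑ x : Fin (m+1) → V,
      if (Fin.snoc x z : Fin (m+2) → V) 0 = v ∧ (Fin.snoc x z : Fin (m+2) → V) (Fin.last (m+1)) = u'' ∧
        (∀ w ∈ W, ∃ i : Fin (m+2), w ∈ nbhd G ((Fin.snoc x z : Fin (m+2) → V) i))
      then walkWt G (Fin.snoc x z) else 0) =
      if z = u'' then (∑ x : Fin (m+1) → V,
        if x 0 = v ∧ (∀ w ∈ W \ nbhd G u'', ∃ i : Fin (m+1), w ∈ nbhd G (x i))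
        then walkWt G x * trP G (x (Fin.last m)) u'' else 0) else 0 := by
    intro z
    by_cases hzu : z = u''
    · subst hzu
      rw [if_pos rfl]
      refine Finset.sum_congr rfl fun x _ => ?_
      rw [hz0, Fin.snoc_last, walkWt_snoc]
      by_cases hx : x 0 = v ∧ (∀ w ∈ W \ nbhd G z, ∃ i : Fin (m+1), w ∈ nbhd G (x i))
      · rw [if_pos ⟨hx.1, rfl, (cover_snoc G x z W).2 hx.2⟩, if_pos hx]
      · rw [if_neg, if_neg hx]
        rintro ⟨h1, -, h3⟩
        exact hx ⟨h1, (cover_snoc G x z W).1 h3⟩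
    · rw [if_neg hzu]
      refine Finset.sum_eq_zero fun x _ => ?_
      rw [if_neg]
      rintro ⟨-, h2, -⟩
      rw [Fin.snoc_last] at h2
      exact hzu h2
  rw [Finset.sum_congr rfl fun z _ => hL z, Finset.sum_ite_eq' Finset.univ u''
    (fun z => (∑ x : Fin (m+1) → V,
        if x 0 = v ∧ (∀ w ∈ W \ nbhd G u'', ∃ i : Fin (m+1), w ∈ nbhd G (x i))
        then walkWt G x * trP G (x (Fin.last m)) u'' else 0)), if_pos (Finset.mem_univ _)]
  -- now RHS
  have hR : ∀ x : Fin (m+1) → V, (∑ u : V, (if x 0 = v ∧ x (Fin.last m) = u ∧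
        (∀ w ∈ W \ nbhd G u'', ∃ i : Fin (m+1), w ∈ nbhd G (x i)) then walkWt G x else 0) * trP G u u'')
      = if x 0 = v ∧ (∀ w ∈ W \ nbhd G u'', ∃ i : Fin (m+1), w ∈ nbhd G (x i))
        then walkWt G x * trP G (x (Fin.last m)) u'' else 0 := by
    intro x
    by_cases h : x 0 = v ∧ (∀ w ∈ W \ nbhd G u'', ∃ i : Fin (m+1), w ∈ nbhd G (x i))
    · rw [if_pos h, Finset.sum_eq_single (x (Fin.last m))]
      · rw [if_pos ⟨h.1, rfl, h.2⟩]
      · intro u _ hne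
        rw [if_neg, zero_mul]
        rintro ⟨-, h2, -⟩
        exact hne h2.symm
      · intro hmem
        exact absurd (Finset.mem_univ _) hmem
    · rw [if_neg h]
      refine Finset.sum_eq_zero fun u _ => ?_
      rw [if_neg, zero_mul]
      rintro ⟨h1, -, h3⟩
      exact h ⟨h1, h3⟩
  simp only [dws, Finset.sum_mul]
  rw [Finset.sum_comm]
  exact Finset.sum_congr rfl fun x _ => (hR x).symm

end Aux5
section Aux5b
set_option linter.unusedSectionVars false
set_option maxHeartbeats 1000000
variable {V : Type*} [Fintype V] [DecidableEq V] (G : SimpleGraph V) [DecidableRel G.Adj]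

lemma snoc_zero {m : ℕ} (x : Fin (m+1) → V) (z : V) :
    (Fin.snoc x z : Fin (m+2) → V) 0 = x 0 := by
  have h : (0 : Fin (m+2)) = Fin.castSucc (0 : Fin (m+1)) := rfl
  rw [h, Fin.snoc_castSucc]

lemma sum_dws (v : V) (m : ℕ) :
    ∑ u : V, dws G v m u Finset.univ = coverF G v m := by
  rw [coverF, Finset.sum_filter]
  simp only [dws]
  rw [Finset.sum_comm]
  refine Finset.sum_congr rfl fun x _ => ?_
  by_cases h : x 0 = v ∧ ∀ u : V, ∃ i, u ∈ nbhd G (x i)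
  · rw [if_pos h, Finset.sum_eq_single (x (Fin.last m))]
    · rw [if_pos ⟨h.1, rfl, fun w _ => h.2 w⟩]
    · intro u _ hne
      rw [if_neg]
      rintro ⟨-, h2, -⟩
      exact hne h2.symm
    · intro hm
      exact absurd (Finset.mem_univ _) hm
  · rw [if_neg h]
    refine Finset.sum_eq_zero fun u _ => ?_
    rw [if_neg]
    rintro ⟨h1, -, h3⟩
    exact h ⟨h1, fun w => h3 w (Finset.mem_univ w)⟩

lemma coverF_mono (v : V) (t : ℕ) : coverF G v t ≤ coverF G v (t+1) := by
  rw [coverF, coverF, Finset.sum_filter, Finset.sum_filter]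
  rw [sum_snoc_eq (fun ℓ : Fin (t+2) → V =>
    if ℓ 0 = v ∧ ∀ u : V, ∃ i, u ∈ nbhd G (ℓ i) then walkWt G ℓ else 0)]
  have key : ∀ x : Fin (t+1) → V,
      (if x 0 = v ∧ ∀ u : V, ∃ i, u ∈ nbhd G (x i) then walkWt G x else 0)
      = ∑ z : V, (if x 0 = v ∧ ∀ u : V, ∃ i, u ∈ nbhd G (x i)
          then walkWt G x * trP G (x (Fin.last t)) z else 0) := by
    intro x
    by_cases h : x 0 = v ∧ ∀ u : V, ∃ i, u ∈ nbhd G (x i)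
    · simp only [if_pos h]
      rw [← Finset.mul_sum, trP_sum, mul_one]
    · simp only [if_neg h]
      exact Finset.sum_const_zero.symm
  rw [Finset.sum_congr rfl fun x _ => key x, Finset.sum_comm]
  refine Finset.sum_le_sum fun z _ => Finset.sum_le_sum fun x _ => ?_
  by_cases h : x 0 = v ∧ ∀ u : V, ∃ i, u ∈ nbhd G (x i)
  · rw [if_pos h]
    have hc : (Fin.snoc x z : Fin (t+2) → V) 0 = v ∧
        ∀ u : V, ∃ i, u ∈ nbhd G ((Fin.snoc x z : Fin (t+2) → V) i) := by
      refine ⟨by rw [snoc_zero]; exact h.1, fun u => ?_⟩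
      obtain ⟨i, hi⟩ := h.2 u
      exact ⟨i.castSucc, by rwa [Fin.snoc_castSucc]⟩
    rw [if_pos hc, walkWt_snoc]
  · rw [if_neg h]
    split
    · exact walkWt_nonneg G _
    · exact le_refl _

end Aux5b
section Aux6
set_option linter.unusedSectionVars false
set_option maxHeartbeats 2000000
variable {V : Type*} [Fintype V] [DecidableEq V] [MeasurableSpace V] [MeasurableSingletonClass V]
  (G : SimpleGraph V) [DecidableRel G.Adj]

lemma measure_split_fst (μ : Measure (V × (V → ℝ))) {C : Set (V × (V → ℝ))}
    (hC : MeasurableSet C) : μ C = ∑ u : V, μ (C ∩ {s | s.1 = u}) := by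
  have h1 : C = ⋃ u : V, (C ∩ {s | s.1 = u}) := by
    ext s; simp [Set.mem_iUnion]
  conv_lhs => rw [h1]
  rw [measure_iUnion ?_ ?_]
  · exact tsum_fintype _
  · intro a b hab
    exact Set.disjoint_left.2 fun s hs hs' => hab (hs.2.symm.trans hs'.2)
  · intro u
    exact hC.inter (measurable_fst (measurableSet_V {u}))

lemma lawAt_null_of_avoid (η : V × (V → ℝ)) {B : Set ℝ} (hBc : B.Countable)
    (hB : ∀ w, η.2 w ∉ B) (t : ℕ) :
    lawAt G η t {s : V × (V → ℝ) | ∃ w, s.2 w ∈ B} = 0 := by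
  have hBm : MeasurableSet B := hBc.measurableSet
  have hBadM : MeasurableSet {s : V × (V → ℝ) | ∃ w, s.2 w ∈ B} := by
    have h : {s : V × (V → ℝ) | ∃ w, s.2 w ∈ B} =
        ⋃ w : V, (fun s : V × (V → ℝ) => s.2 w) ⁻¹' B := by
      ext s; simp [Set.mem_iUnion]
    rw [h]
    exact MeasurableSet.iUnion fun w => ((measurable_pi_apply w).comp measurable_snd) hBm
  induction t with
  | zero =>
    show Measure.dirac η _ = 0
    rw [Measure.dirac_apply' _ hBadM, Set.indicator_apply, if_neg]
    rintro ⟨w, hw⟩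
    exact hB w hw
  | succ n ih =>
    show (lawAt G η n).bind (step G) _ = 0
    rw [Measure.bind_apply hBadM (measurable_step G).aemeasurable]
    have hm : Measurable fun s : V × (V → ℝ) => step G s {s : V × (V → ℝ) | ∃ w, s.2 w ∈ B} :=
      (Measure.measurable_coe hBadM).comp (measurable_step G)
    rw [lintegral_eq_zero_iff hm]
    have hae : ∀ᵐ s ∂(lawAt G η n), s ∉ {s : V × (V → ℝ) | ∃ w, s.2 w ∈ B} := by
      rw [ae_iff]
      exact measure_mono_null (fun s hs => not_not.1 hs) ih
    filter_upwards [hae] with s hs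
    show step G s _ = 0
    rw [step_apply G s hBadM]
    refine measure_mono_null (t := ⋃ w : V, Function.eval w ⁻¹' B) ?_
      (measure_iUnion_null fun w : V =>
        Measure.pi_eval_preimage_null (fun _ => expM) (i := w) (expM_countable_null hBc))
    intro U hU
    obtain ⟨w, hw⟩ := hU
    simp only [stepFun] at hw
    by_cases hmem : w ∈ nbhd G (argMap G s)
    · rw [if_pos hmem] at hw
      exact Set.mem_iUnion.2 ⟨w, hw⟩
    · rw [if_neg hmem] at hw
      exact absurd ⟨w, hw⟩ hs

lemma measurableSet_guard (u : V) (W : Finset V) (Γ' : V → ℝ) :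
    MeasurableSet (⋂ w ∈ (W : Set V), {s : V × (V → ℝ) | w ∉ nbhd G u → s.2 w ≠ Γ' w}) := by
  refine MeasurableSet.biInter W.countable_toSet fun w _ => ?_
  by_cases hw : w ∈ nbhd G u
  · have h : {s : V × (V → ℝ) | w ∉ nbhd G u → s.2 w ≠ Γ' w} = Set.univ := by
      ext s; simp [hw]
    rw [h]; exact MeasurableSet.univ
  · have h : {s : V × (V → ℝ) | w ∉ nbhd G u → s.2 w ≠ Γ' w} =
        ((fun s : V × (V → ℝ) => s.2 w) ⁻¹' {Γ' w})ᶜ := by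
      ext s; simp [hw]
    rw [h]
    exact (((measurable_pi_apply w).comp measurable_snd)
      (measurableSet_singleton (Γ' w))).compl

lemma measurableSet_event (u : V) (W : Finset V) (Γ' : V → ℝ) {E : Set (V → ℝ)}
    (hE : MeasurableSet E) :
    MeasurableSet {s : V × (V → ℝ) | s.1 = u ∧
      (∀ w ∈ W, w ∉ nbhd G u → s.2 w ≠ Γ' w) ∧ s.2 ∈ E} := by
  have h : {s : V × (V → ℝ) | s.1 = u ∧ (∀ w ∈ W, w ∉ nbhd G u → s.2 w ≠ Γ' w) ∧ s.2 ∈ E}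
      = (Prod.fst ⁻¹' {u}) ∩
        ((⋂ w ∈ (W : Set V), {s : V × (V → ℝ) | w ∉ nbhd G u → s.2 w ≠ Γ' w}) ∩
          (Prod.snd ⁻¹' E)) := by
    ext s
    simp only [Set.mem_inter_iff, Set.mem_preimage, Set.mem_singleton_iff, Set.mem_iInter,
      Set.mem_setOf_eq, Finset.mem_coe]
    try tauto
  rw [h]
  exact (measurable_fst (measurableSet_V {u})).inter
    ((measurableSet_guard G u W Γ').inter (measurable_snd hE))

lemma piE_Eu_le (u u'' : V) :
    piE V {g : V → ℝ | argminOn g (nbhd G u) ⟨u, Finset.mem_insert_self _ _⟩ = u''} ≤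
      ENNReal.ofReal (trP G u u'') := by
  by_cases h : u'' ∈ nbhd G u
  · refine le_trans (piE_argmin_le _ _ u'' h) ?_
    rw [trP, if_pos h, ENNReal.ofReal_div_of_pos (by exact_mod_cast nbhd_card_pos G u),
      ENNReal.ofReal_one, ENNReal.ofReal_natCast, one_div]
  · have hsub : {g : V → ℝ | argminOn g (nbhd G u) ⟨u, Finset.mem_insert_self _ _⟩ = u''}
        = ∅ := by
      ext g
      simp only [Set.mem_setOf_eq, Set.mem_empty_iff_false, iff_false]
      intro hg
      exact h (hg ▸ argminOn_mem g (nbhd G u) _)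
    rw [hsub, measure_empty]
    exact zero_le

/-- `E` only depends on coordinates in the closed neighborhood of `u`. -/
def DetOn (u : V) (E : Set (V → ℝ)) : Prop :=
  ∀ g g' : V → ℝ, (∀ w ∈ nbhd G u, g w = g' w) → (g ∈ E ↔ g' ∈ E)

lemma claimL2 (v : V) (Γ' : V → ℝ) (hmin : ∀ c ∈ nbhd G v, c ≠ v → Γ' v < Γ' c) :
    ∀ (m : ℕ) (u : V) (W : Finset V) (E : Set (V → ℝ)), MeasurableSet E → DetOn G u E →
    lawAt G (v, Γ') (m+1) {s : V × (V → ℝ) | s.1 = u ∧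
        (∀ w ∈ W, w ∉ nbhd G u → s.2 w ≠ Γ' w) ∧ s.2 ∈ E}
      ≤ ENNReal.ofReal (dws G v m u W) * piE V E := by
  intro m
  induction m with
  | zero =>
    intro u W E hE hDet
    have h1 : lawAt G (v, Γ') 1 = step G (v, Γ') := by
      show (Measure.dirac (v, Γ')).bind (step G) = _
      exact Measure.dirac_bind (measurable_step G) _
    rw [h1, step_apply G _ (measurableSet_event G u W Γ' hE)]
    have hargv : argMap G (v, Γ') = v := argminOn_eq_of_unique _ (nbhd_self G v) hmin
    have hstep : ∀ U : V → ℝ, stepFun G ((v, Γ'), U) =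
        (v, fun w => if w ∈ nbhd G v then U w else Γ' w) := by
      intro U
      simp [stepFun, hargv]
    by_cases hu : u = v
    · subst hu
      by_cases hW : ∀ w ∈ W, w ∈ nbhd G u
      · have hpre : (fun U : V → ℝ => stepFun G ((u, Γ'), U)) ⁻¹'
            {s : V × (V → ℝ) | s.1 = u ∧
              (∀ w ∈ W, w ∉ nbhd G u → s.2 w ≠ Γ' w) ∧ s.2 ∈ E} = E := by
          ext U
          constructor
          · intro hU
            rw [Set.mem_preimage, hstep U] at hU
            obtain ⟨-, -, hU3⟩ := hU
            exact (hDet _ U fun w hw => by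
              show (if w ∈ nbhd G u then U w else Γ' w) = U w
              rw [if_pos hw]).mp hU3
          · intro hU
            rw [Set.mem_preimage, hstep U]
            exact ⟨rfl, fun w hw hnw => absurd (hW w hw) hnw,
              (hDet _ U fun w hw => by
                show (if w ∈ nbhd G u then U w else Γ' w) = U w
                rw [if_pos hw]).mpr hU⟩
        rw [hpre, dws_zero_self G u W hW, ENNReal.ofReal_one, one_mul]
      · push_neg at hW
        obtain ⟨w₀, hw₀W, hw₀n⟩ := hW
        have hpre : (fun U : V → ℝ => stepFun G ((u, Γ'), U)) ⁻¹'
            {s : V × (V → ℝ) | s.1 = u ∧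
              (∀ w ∈ W, w ∉ nbhd G u → s.2 w ≠ Γ' w) ∧ s.2 ∈ E} = ∅ := by
          ext U
          simp only [Set.mem_empty_iff_false, iff_false]
          intro hU
          rw [Set.mem_preimage, hstep U] at hU
          exact hU.2.1 w₀ hw₀W hw₀n (by
            show (if w₀ ∈ nbhd G u then U w₀ else Γ' w₀) = Γ' w₀
            rw [if_neg hw₀n])
        rw [hpre, measure_empty]
        exact zero_le
    · have hpre : (fun U : V → ℝ => stepFun G ((v, Γ'), U)) ⁻¹'
          {s : V × (V → ℝ) | s.1 = u ∧
            (∀ w ∈ W, w ∉ nbhd G u → s.2 w ≠ Γ' w) ∧ s.2 ∈ E} = ∅ := by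
        ext U
        simp only [Set.mem_empty_iff_false, iff_false]
        intro hU
        rw [Set.mem_preimage, hstep U] at hU
        exact hu hU.1.symm
      rw [hpre, measure_empty]
      exact zero_le
  | succ n ih =>
    intro u'' W E hE hDet
    show (lawAt G (v, Γ') (n+1)).bind (step G) _ ≤ _
    have hTm : MeasurableSet {s : V × (V → ℝ) | s.1 = u'' ∧
        (∀ w ∈ W, w ∉ nbhd G u'' → s.2 w ≠ Γ' w) ∧ s.2 ∈ E} :=
      measurableSet_event G u'' W Γ' hE
    rw [Measure.bind_apply hTm (measurable_step G).aemeasurable]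
    set C := {s : V × (V → ℝ) | argMap G s = u'' ∧
      (∀ w ∈ W, w ∉ nbhd G u'' → s.2 w ≠ Γ' w)} with hCdef
    have hCm : MeasurableSet C := by
      have h : C = (argMap G ⁻¹' {u''}) ∩
          (⋂ w ∈ (W : Set V), {s : V × (V → ℝ) | w ∉ nbhd G u'' → s.2 w ≠ Γ' w}) := by
        ext s
        simp only [hCdef, Set.mem_inter_iff, Set.mem_preimage, Set.mem_singleton_iff,
          Set.mem_iInter, Set.mem_setOf_eq, Finset.mem_coe]
        try tauto
      rw [h]
      exact ((measurable_argMap G) (measurableSet_singleton u'')).inter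
        (measurableSet_guard G u'' W Γ')
    have hκ : ∀ s, step G s {s : V × (V → ℝ) | s.1 = u'' ∧
        (∀ w ∈ W, w ∉ nbhd G u'' → s.2 w ≠ Γ' w) ∧ s.2 ∈ E}
        = C.indicator (fun _ => piE V E) s := by
      intro s
      rw [step_apply G s hTm]
      by_cases hs : s ∈ C
      · rw [Set.indicator_of_mem hs]
        obtain ⟨hs1, hs2⟩ := hs
        have hpre : (fun U : V → ℝ => stepFun G (s, U)) ⁻¹'
            {s : V × (V → ℝ) | s.1 = u'' ∧
              (∀ w ∈ W, w ∉ nbhd G u'' → s.2 w ≠ Γ' w) ∧ s.2 ∈ E} = E := by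
          ext U
          constructor
          · intro hU
            obtain ⟨-, -, hU3⟩ := hU
            refine (hDet _ U fun w hw => ?_).mp hU3
            show (if w ∈ nbhd G (argMap G s) then U w else s.2 w) = U w
            rw [hs1, if_pos hw]
          · intro hU
            refine ⟨hs1, fun w hw hnw => ?_, ?_⟩
            · show (if w ∈ nbhd G (argMap G s) then U w else s.2 w) ≠ Γ' w
              rw [hs1, if_neg hnw]
              exact hs2 w hw hnw
            · exact (hDet _ U fun w hw => by
                show (if w ∈ nbhd G (argMap G s) then U w else s.2 w) = U w
                rw [hs1, if_pos hw]).mpr hU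
        rw [hpre]
      · rw [Set.indicator_of_notMem hs]
        have hpre : (fun U : V → ℝ => stepFun G (s, U)) ⁻¹'
            {s : V × (V → ℝ) | s.1 = u'' ∧
              (∀ w ∈ W, w ∉ nbhd G u'' → s.2 w ≠ Γ' w) ∧ s.2 ∈ E} = ∅ := by
          ext U
          simp only [Set.mem_empty_iff_false, iff_false]
          rintro ⟨h1, h2, -⟩
          have h1' : argMap G s = u'' := h1
          refine hs ⟨h1', fun w hw hnw => ?_⟩
          have h3 : (if w ∈ nbhd G (argMap G s) then U w else s.2 w) ≠ Γ' w := h2 w hw hnw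
          rwa [h1', if_neg hnw] at h3
        rw [hpre, measure_empty]
    calc ∫⁻ s, step G s {s : V × (V → ℝ) | s.1 = u'' ∧
            (∀ w ∈ W, w ∉ nbhd G u'' → s.2 w ≠ Γ' w) ∧ s.2 ∈ E} ∂(lawAt G (v, Γ') (n+1))
        = ∫⁻ s, C.indicator (fun _ => piE V E) s ∂(lawAt G (v, Γ') (n+1)) :=
          lintegral_congr fun s => hκ s
      _ = piE V E * lawAt G (v, Γ') (n+1) C := lintegral_indicator_const hCm _
      _ = piE V E * ∑ u : V, lawAt G (v, Γ') (n+1) (C ∩ {s | s.1 = u}) := by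
          rw [measure_split_fst _ hCm]
      _ ≤ piE V E * ∑ u : V, ENNReal.ofReal (dws G v n u (W \ nbhd G u'') * trP G u u'') := by
          refine mul_le_mul_right (Finset.sum_le_sum fun u _ => ?_) _
          have hDetu : DetOn G u {g : V → ℝ |
              argminOn g (nbhd G u) ⟨u, Finset.mem_insert_self _ _⟩ = u''} :=
            fun g g' hagree =>
              ⟨fun h => (argminOn_congr ⟨u, Finset.mem_insert_self _ _⟩ hagree).symm.trans h,
               fun h => (argminOn_congr ⟨u, Finset.mem_insert_self _ _⟩ hagree).trans h⟩
          have hsub : C ∩ {s | s.1 = u} ⊆ {s : V × (V → ℝ) | s.1 = u ∧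
              (∀ w ∈ W \ nbhd G u'', w ∉ nbhd G u → s.2 w ≠ Γ' w) ∧
              s.2 ∈ {g : V → ℝ | argminOn g (nbhd G u) ⟨u, Finset.mem_insert_self _ _⟩ = u''}} := by
            rintro ⟨s1, s2⟩ ⟨⟨h1, h2⟩, h3⟩
            have h3' : s1 = u := h3
            subst h3'
            refine ⟨rfl, fun w hw hnw => ?_, h1⟩
            obtain ⟨hwW, hwn⟩ := Finset.mem_sdiff.1 hw
            exact h2 w hwW hwn
          calc lawAt G (v, Γ') (n+1) (C ∩ {s | s.1 = u})
              ≤ lawAt G (v, Γ') (n+1) {s : V × (V → ℝ) | s.1 = u ∧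
                (∀ w ∈ W \ nbhd G u'', w ∉ nbhd G u → s.2 w ≠ Γ' w) ∧
                s.2 ∈ {g : V → ℝ | argminOn g (nbhd G u) ⟨u, Finset.mem_insert_self _ _⟩ = u''}} :=
                measure_mono hsub
            _ ≤ ENNReal.ofReal (dws G v n u (W \ nbhd G u'')) *
                piE V {g : V → ℝ | argminOn g (nbhd G u) ⟨u, Finset.mem_insert_self _ _⟩ = u''} :=
                ih u (W \ nbhd G u'') _ (measurableSet_argminOn_fiber _ _ u'') hDetu
            _ ≤ ENNReal.ofReal (dws G v n u (W \ nbhd G u'')) * ENNReal.ofReal (trP G u u'') :=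
                mul_le_mul_right (piE_Eu_le G u u'') _
            _ = ENNReal.ofReal (dws G v n u (W \ nbhd G u'') * trP G u u'') :=
                (ENNReal.ofReal_mul (dws_nonneg G v n u _)).symm
      _ = ENNReal.ofReal (dws G v (n+1) u'' W) * piE V E := by
          rw [← ENNReal.ofReal_sum_of_nonneg fun u _ =>
            mul_nonneg (dws_nonneg G v n u _) (trP_nonneg G u u''), ← dws_succ, mul_comm]

end Aux6
section Aux7
set_option linter.unusedSectionVars false
set_option maxHeartbeats 2000000

lemma toReal_prob_le_one {α : Type*} [MeasurableSpace α] (μ : Measure α)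
    [IsProbabilityMeasure μ] (A : Set α) : (μ A).toReal ≤ 1 := by
  calc (μ A).toReal ≤ (1 : ℝ≥0∞).toReal := ENNReal.toReal_mono ENNReal.one_ne_top prob_le_one
    _ = 1 := rfl

lemma tvDist_abs_le_one {α : Type*} [MeasurableSpace α] (μ ν : Measure α)
    [IsProbabilityMeasure μ] [IsProbabilityMeasure ν] (A : Set α) :
    |(μ A).toReal - (ν A).toReal| ≤ 1 := by
  have h1 := toReal_prob_le_one μ A
  have h2 := toReal_prob_le_one ν A
  have h3 : 0 ≤ (μ A).toReal := ENNReal.toReal_nonneg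
  have h4 : 0 ≤ (ν A).toReal := ENNReal.toReal_nonneg
  rw [abs_le]
  constructor <;> linarith

lemma tvDist_le_one {α : Type*} [MeasurableSpace α] (μ ν : Measure α)
    [IsProbabilityMeasure μ] [IsProbabilityMeasure ν] : tvDist μ ν ≤ 1 :=
  Real.iSup_le (fun A => tvDist_abs_le_one μ ν A.1) zero_le_one

lemma le_tvDist {α : Type*} [MeasurableSpace α] (μ ν : Measure α)
    [IsProbabilityMeasure μ] [IsProbabilityMeasure ν] {A : Set α} (hA : MeasurableSet A) :
    |(μ A).toReal - (ν A).toReal| ≤ tvDist μ ν :=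
  le_ciSup (f := fun A : {A : Set α // MeasurableSet A} => |(μ A.1).toReal - (ν A.1).toReal|)
    ⟨1, by rintro x ⟨B, rfl⟩; exact tvDist_abs_le_one μ ν B.1⟩ ⟨A, hA⟩

end Aux7
/-- `d̄_t ≥ P(σ^min > t)`, where `σ^min` has distribution function
`F^min = max_v F_v` and `F_v` is the distribution function of
`σ̃_v = inf{t ≥ 0 : ∪_{s ≤ t} A_{X_s} = V}` for the random walk started at `v`; hence
`P(σ^min > t) = 1 - max_v F_v(t)`. -/
theorem localBS_dbar_lower_bound {V : Type*} [Fintype V] [DecidableEq V]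
    [Nonempty V] [MeasurableSpace V] [MeasurableSingletonClass V]
    (G : SimpleGraph V) [DecidableRel G.Adj] (hconn : G.Connected) :
    ∀ t : ℕ, 1 - Finset.univ.sup' Finset.univ_nonempty (fun v => coverF G v t)
      ≤ dbar G t := by
  intro t
  obtain ⟨v, -, hv⟩ := Finset.exists_mem_eq_sup' Finset.univ_nonempty
    (fun v : V => coverF G v t)
  rw [hv]
  set e := Fintype.equivFin V with he
  set Γ : V → ℝ := fun w => 2 * ((e w : ℕ) : ℝ) + 1 with hΓ
  set Γ' : V → ℝ := fun w => if w = v then 0 else 2 * ((e w : ℕ) : ℝ) + 2 with hΓ'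
  have hΓinj : Function.Injective Γ := by
    intro a b hab
    simp only [hΓ] at hab
    have h1 : ((e a : ℕ) : ℝ) = ((e b : ℕ) : ℝ) := by linarith
    exact e.injective (Fin.val_injective (Nat.cast_injective h1))
  have hΓ'inj : Function.Injective Γ' := by
    intro a b hab
    simp only [hΓ'] at hab
    by_cases ha : a = v <;> by_cases hb : b = v
    · rw [ha, hb]
    · rw [if_pos ha, if_neg hb] at hab
      have := Nat.cast_nonneg (α := ℝ) (e b : ℕ)
      linarith
    · rw [if_neg ha, if_pos hb] at hab
      have := Nat.cast_nonneg (α := ℝ) (e a : ℕ)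
      linarith
    · rw [if_neg ha, if_neg hb] at hab
      have h1 : ((e a : ℕ) : ℝ) = ((e b : ℕ) : ℝ) := by linarith
      exact e.injective (Fin.val_injective (Nat.cast_injective h1))
  have hΓnn : ∀ w, 0 ≤ Γ w := by
    intro w
    simp only [hΓ]
    have := Nat.cast_nonneg (α := ℝ) (e w : ℕ)
    linarith
  have hΓ'nn : ∀ w, 0 ≤ Γ' w := by
    intro w
    simp only [hΓ']
    split
    · exact le_refl 0
    · have := Nat.cast_nonneg (α := ℝ) (e w : ℕ)
      linarith
  have hdisj : ∀ w w', Γ w ≠ Γ' w' := by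
    intro w w' hww
    simp only [hΓ, hΓ'] at hww
    by_cases hw' : w' = v
    · rw [if_pos hw'] at hww
      have := Nat.cast_nonneg (α := ℝ) (e w : ℕ)
      linarith
    · rw [if_neg hw'] at hww
      have hn : 2 * (e w : ℕ) + 1 = 2 * (e w' : ℕ) + 2 := by exact_mod_cast hww
      omega
  have hmin : ∀ c ∈ nbhd G v, c ≠ v → Γ' v < Γ' c := by
    intro c _ hc
    simp only [hΓ', if_pos rfl, if_neg hc]
    have := Nat.cast_nonneg (α := ℝ) (e c : ℕ)
    linarith
  have hgood : ((v, Γ) : V × (V → ℝ)) ∈ goodStates := ⟨hΓinj, hΓnn⟩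
  have hgood' : ((v, Γ') : V × (V → ℝ)) ∈ goodStates := ⟨hΓ'inj, hΓ'nn⟩
  set A : Set (V × (V → ℝ)) := {s | ∀ w, s.2 w ≠ Γ' w} with hA
  have hAm : MeasurableSet A := by
    have h : A = ⋂ w : V, ((fun s : V × (V → ℝ) => s.2 w) ⁻¹' {Γ' w})ᶜ := by
      ext s; simp [hA]
    rw [h]
    exact MeasurableSet.iInter fun w =>
      (((measurable_pi_apply w).comp measurable_snd) (measurableSet_singleton (Γ' w))).compl
  have hμA : lawAt G (v, Γ) t A = 1 := by
    have hnull := lawAt_null_of_avoid G (v, Γ) (B := Set.range Γ')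
      (Set.finite_range Γ').countable
      (by rintro w ⟨w', hw'⟩; exact hdisj w w' hw'.symm) t
    have hsub : Aᶜ ⊆ {s : V × (V → ℝ) | ∃ w, s.2 w ∈ Set.range Γ'} := by
      intro s hs
      simp only [hA, Set.mem_compl_iff, Set.mem_setOf_eq, not_forall, not_not] at hs
      obtain ⟨w, hw⟩ := hs
      exact ⟨w, ⟨w, hw.symm⟩⟩
    have hc : lawAt G (v, Γ) t Aᶜ = 0 := measure_mono_null hsub hnull
    exact (prob_compl_eq_zero_iff hAm).1 hc
  have hνA : lawAt G (v, Γ') t A ≤ ENNReal.ofReal (coverF G v t) := by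
    cases t with
    | zero =>
      show Measure.dirac (v, Γ') A ≤ _
      rw [Measure.dirac_apply' _ hAm, Set.indicator_apply, if_neg]
      · exact zero_le
      · intro hmem
        exact hmem v rfl
    | succ m =>
      rw [measure_split_fst _ hAm]
      have hstep1 : ∀ u : V, lawAt G (v, Γ') (m+1) (A ∩ {s | s.1 = u}) ≤
          ENNReal.ofReal (dws G v m u Finset.univ) := by
        intro u
        have hsub : A ∩ {s | s.1 = u} ⊆ {s : V × (V → ℝ) | s.1 = u ∧
            (∀ w ∈ Finset.univ, w ∉ nbhd G u → s.2 w ≠ Γ' w) ∧ s.2 ∈ Set.univ} := by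
          rintro s ⟨h1, h2⟩
          exact ⟨h2, fun w _ _ => h1 w, trivial⟩
        calc lawAt G (v, Γ') (m+1) (A ∩ {s | s.1 = u})
            ≤ lawAt G (v, Γ') (m+1) {s : V × (V → ℝ) | s.1 = u ∧
              (∀ w ∈ Finset.univ, w ∉ nbhd G u → s.2 w ≠ Γ' w) ∧ s.2 ∈ Set.univ} :=
              measure_mono hsub
          _ ≤ ENNReal.ofReal (dws G v m u Finset.univ) * piE V Set.univ :=
              claimL2 G v Γ' hmin m u Finset.univ Set.univ MeasurableSet.univ
                (fun g g' _ => Iff.rfl)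
          _ = ENNReal.ofReal (dws G v m u Finset.univ) := by
              rw [measure_univ, mul_one]
      calc ∑ u : V, lawAt G (v, Γ') (m+1) (A ∩ {s | s.1 = u})
          ≤ ∑ u : V, ENNReal.ofReal (dws G v m u Finset.univ) :=
            Finset.sum_le_sum fun u _ => hstep1 u
        _ = ENNReal.ofReal (∑ u : V, dws G v m u Finset.univ) :=
            (ENNReal.ofReal_sum_of_nonneg fun u _ => dws_nonneg G v m u _).symm
        _ = ENNReal.ofReal (coverF G v m) := by rw [sum_dws]
        _ ≤ ENNReal.ofReal (coverF G v (m+1)) := ENNReal.ofReal_le_ofReal (coverF_mono G v m)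
  -- conclude
  have hνr : (lawAt G (v, Γ') t A).toReal ≤ coverF G v t := by
    have h1 := ENNReal.toReal_mono ENNReal.ofReal_ne_top hνA
    rwa [ENNReal.toReal_ofReal (coverF_nonneg G v t)] at h1
  have hμr : (lawAt G (v, Γ) t A).toReal = 1 := by rw [hμA, ENNReal.toReal_one]
  have habs : 1 - coverF G v t ≤ |(lawAt G (v, Γ) t A).toReal - (lawAt G (v, Γ') t A).toReal| := by
    rw [hμr]
    calc 1 - coverF G v t ≤ 1 - (lawAt G (v, Γ') t A).toReal := by linarith
      _ ≤ |1 - (lawAt G (v, Γ') t A).toReal| := le_abs_self _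
  have htv : 1 - coverF G v t ≤ tvDist (lawAt G (v, Γ) t) (lawAt G (v, Γ') t) :=
    le_trans habs (le_tvDist _ _ hAm)
  have hsup1 : tvDist (lawAt G (v, Γ) t) (lawAt G (v, Γ') t) ≤
      ⨆ η' : (goodStates (V := V)), tvDist (lawAt G (v, Γ) t) (lawAt G η'.1 t) :=
    le_ciSup (f := fun η' : (goodStates (V := V)) =>
        tvDist (lawAt G (v, Γ) t) (lawAt G η'.1 t))
      ⟨1, by rintro x ⟨η', rfl⟩; exact tvDist_le_one _ _⟩ ⟨(v, Γ'), hgood'⟩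
  have hsup2 : (⨆ η' : (goodStates (V := V)), tvDist (lawAt G (v, Γ) t) (lawAt G η'.1 t)) ≤
      dbar G t :=
    le_ciSup (f := fun η : (goodStates (V := V)) =>
        ⨆ η' : (goodStates (V := V)), tvDist (lawAt G η.1 t) (lawAt G η'.1 t))
      ⟨1, by
        rintro x ⟨η, rfl⟩
        exact Real.iSup_le (fun η' => tvDist_le_one _ _) zero_le_one⟩ ⟨(v, Γ), hgood⟩
  linarith [le_trans htv (le_trans hsup1 hsup2)]
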